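/- Let f : ℝ × ℝ → ℝ be differentiable at the point (x, y). Then the Sobel-filter difference quotient converges to the first partial derivative: as h → 0 with h ≠ 0, the quantity [f(x+h, y−h) + 2·f(x+h, y) + f(x+h, y+h) − f(x−h, y−h) − 2·f(x−h, y) − f(x−h, y+h)] / (8h) tends to ∂f/∂x (x, y). -/

import Mathlib

open Filter

lemma sym_quot_tendsto (f : ℝ × ℝ → ℝ) (x y c : ℝ)
    (hf : DifferentiableAt ℝ f (x, y)) :
    Tendsto (fun h : ℝ =>
        (f (x + h, y + c * h) - f (x - h, y - c * h)) / (2 * h))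
      (nhdsWithin 0 {0}ᶜ)
      (nhds (fderiv ℝ f (x, y) (1, c))) := by
  set L := fderiv ℝ f (x, y) with hL
  set g : ℝ → ℝ := fun h => f (x + h, y + c * h) with hg
  have hinner : HasDerivAt (fun h : ℝ => (x + h, y + c * h)) ((1 : ℝ), c) 0 := by
    have h2 : HasDerivAt (fun h : ℝ => y + c * h) c 0 := by
      simpa using ((hasDerivAt_id 0).const_mul c).const_add y
    exact (((hasDerivAt_id 0).const_add x)).prodMk h2
  have hgd : HasDerivAt g (L (1, c)) 0 := by
    have h0 : (fun h : ℝ => (x + h, y + c * h)) 0 = (x, y) := by simp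
    have hf' : HasFDerivAt f L ((fun h : ℝ => (x + h, y + c * h)) 0) := by
      rw [h0]; exact hf.hasFDerivAt
    have := hf'.comp_hasDerivAt 0 hinner
    exact this
  have hslope : Tendsto (slope g 0) (nhdsWithin 0 {0}ᶜ) (nhds (L (1, c))) :=
    hasDerivAt_iff_tendsto_slope.mp hgd
  have hneg : Tendsto (fun h : ℝ => -h) (nhdsWithin 0 {0}ᶜ) (nhdsWithin 0 {0}ᶜ) := by
    refine tendsto_nhdsWithin_of_tendsto_nhds_of_eventually_within _ ?_ ?_
    · simpa using (continuous_neg.tendsto (0 : ℝ)).mono_left nhdsWithin_le_nhds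
    · filter_upwards [self_mem_nhdsWithin] with h hh
      simpa using hh
  have hslope' : Tendsto (fun h : ℝ => slope g 0 (-h)) (nhdsWithin 0 {0}ᶜ)
      (nhds (L (1, c))) := hslope.comp hneg
  have hsum := (hslope.add hslope').div_const 2
  have heq : ∀ᶠ h in nhdsWithin (0:ℝ) {0}ᶜ,
      (slope g 0 h + slope g 0 (-h)) / 2
        = (f (x + h, y + c * h) - f (x - h, y - c * h)) / (2 * h) := by
    filter_upwards [self_mem_nhdsWithin] with h hh
    have hne : h ≠ 0 := hh
    have hg0 : g 0 = f (x, y) := by simp [hg]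
    have hgneg : g (-h) = f (x - h, y - c * h) := by
      simp [hg, sub_eq_add_neg, mul_comm, mul_neg]
    simp only [slope_def_field, hg0, hgneg, hg]
    field_simp [hne, sub_eq_iff_eq_add, div_eq_iff]
    ring
  have := hsum.congr' heq
  convert this using 2
  ring

/-- The Sobel-filter difference quotient converges to the first partial
derivative: for `f : ℝ × ℝ → ℝ` differentiable at `(x, y)`, as `h → 0` with
`h ≠ 0`, the normalized weighted central difference with weights
`(1, 2, 1)` tends to `∂f/∂x (x, y) = fderiv ℝ f (x, y) (1, 0)`. -/
theorem sobel_tendsto_partial_deriv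
    (f : ℝ × ℝ → ℝ) (x y : ℝ)
    (hf : DifferentiableAt ℝ f (x, y)) :
    Tendsto
      (fun h : ℝ =>
        (f (x + h, y - h) + 2 * f (x + h, y) + f (x + h, y + h)
          - f (x - h, y - h) - 2 * f (x - h, y) - f (x - h, y + h)) / (8 * h))
      (nhdsWithin 0 {0}ᶜ)
      (nhds (fderiv ℝ f (x, y) (1, 0))) := by
  set L := fderiv ℝ f (x, y) with hL
  have t1 := sym_quot_tendsto f x y (-1) hf
  have t0 := sym_quot_tendsto f x y 0 hf
  have t2 := sym_quot_tendsto f x y 1 hf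
  have hsum := ((t1.add ((t0.const_mul 2))).add t2).div_const 4
  have hval : (L (1, -1) + 2 * L (1, 0) + L (1, 1)) / 4 = L (1, 0) := by
    have hadd : L (1, -1) + L (1, 1) = 2 * L (1, 0) := by
      rw [← L.map_add]
      have : ((1:ℝ), (-1:ℝ)) + (1, 1) = (2:ℝ) • ((1:ℝ), (0:ℝ)) := by
        simp [Prod.ext_iff]; norm_num
      rw [this, L.map_smul]
      simp [smul_eq_mul]
    linarith
  rw [← hval]
  refine hsum.congr' ?_
  filter_upwards [self_mem_nhdsWithin] with h hh
  have hne : (h:ℝ) ≠ 0 := hh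
  have e1 : y + (-1) * h = y - h := by ring
  have e2 : y - (-1) * h = y + h := by ring
  have e3 : y + (0:ℝ) * h = y := by ring
  have e4 : y - (0:ℝ) * h = y := by ring
  have e5 : y + (1:ℝ) * h = y + h := by ring
  have e6 : y - (1:ℝ) * h = y - h := by ring
  rw [e1, e2, e3, e4, e5, e6]
  field_simp
  ring
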